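/- Let n ≥ 2, let p₁ < p₂ < ⋯ < pₙ < 0 be reals and w₁, …, wₙ > 0. Then there exist constants C > 0 and x₀ > 0 such that for all x ≥ x₀: | (Σ_{i=1}^n w_i·x^{p_i−1}) / (Σ_{i=1}^n w_i·(1−p_i)·x^{p_i−2}) − x/(1−pₙ) | ≤ C·x^{p_{n−1}−pₙ+1}. -/

import Mathlib

/-- Estimate on the absolute risk tolerance of a collective utility under a linear sharing
rule (proof of Proposition 2.13): for large `x`,
`|ART₁(x) - x/(1-pₙ)| ≤ C x^{p_{n-1}-pₙ+1}`. -/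
theorem linear_sharing_ART_estimate
    (n : ℕ) (hn : 2 ≤ n)
    (p : Fin n → ℝ) (hpmono : StrictMono p) (hpneg : ∀ i, p i < 0)
    (w : Fin n → ℝ) (hw : ∀ i, 0 < w i) :
    ∃ C : ℝ, 0 < C ∧ ∃ x₀ : ℝ, 0 < x₀ ∧ ∀ x : ℝ, x₀ ≤ x →
      |(∑ i, w i * x ^ (p i - 1)) / (∑ i, w i * (1 - p i) * x ^ (p i - 2)) -
          x / (1 - p ⟨n - 1, by omega⟩)| ≤
        C * x ^ (p ⟨n - 2, by omega⟩ - p ⟨n - 1, by omega⟩ + 1) := by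
  set a : Fin n := ⟨n - 1, by omega⟩ with ha
  set b : Fin n := ⟨n - 2, by omega⟩ with hb
  set q := p a with hqdef
  set r := p b with hrdef
  have hq1 : 0 < 1 - q := by have := hpneg a; linarith
  have hqp : ∀ i, p i ≤ q := by
    intro i
    apply hpmono.monotone
    show (i : ℕ) ≤ n - 1
    have := i.isLt; omega
  have hple : ∀ i : Fin n, i ≠ a → p i ≤ r := by
    intro i hi
    apply hpmono.monotone
    show (i : ℕ) ≤ n - 2
    have h1 : (i : ℕ) ≠ n - 1 := fun h => hi (Fin.ext h)
    have := i.isLt; omega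
  set S := ∑ i, w i * (q - p i) with hSdef
  have hS0 : 0 < S := by
    apply Finset.sum_pos'
    · intro i _
      exact mul_nonneg (hw i).le (by linarith [hqp i])
    · refine ⟨⟨0, by omega⟩, Finset.mem_univ _, ?_⟩
      have hlt : p ⟨0, by omega⟩ < q := hpmono (by show (0:ℕ) < n - 1; omega)
      have := hw ⟨0, by omega⟩
      nlinarith
  have hwa := hw a
  have hC0 : 0 < S / (w a * (1 - q) ^ 2) := div_pos hS0 (mul_pos hwa (pow_pos hq1 2))
  refine ⟨S / (w a * (1 - q) ^ 2), hC0, 1, one_pos, ?_⟩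
  intro x hx
  have hx0 : (0:ℝ) < x := by linarith
  set D := ∑ i, w i * (1 - p i) * x ^ (p i - 2) with hDdef
  have hDterm : ∀ i : Fin n, 0 ≤ w i * (1 - p i) * x ^ (p i - 2) := by
    intro i
    exact mul_nonneg (mul_nonneg (hw i).le (by linarith [hpneg i]))
      (Real.rpow_pos_of_pos hx0 _).le
  have hDlow : w a * (1 - q) * x ^ (q - 2) ≤ D := by
    exact Finset.single_le_sum (fun i _ => hDterm i) (Finset.mem_univ a)
  have hD0 : 0 < D := lt_of_lt_of_le
    (mul_pos (mul_pos hwa hq1) (Real.rpow_pos_of_pos hx0 _)) hDlow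
  have key : (∑ i, w i * x ^ (p i - 1)) * (1 - q) - D * x =
      ∑ i, w i * (p i - q) * x ^ (p i - 1) := by
    rw [Finset.sum_mul, hDdef, Finset.sum_mul, ← Finset.sum_sub_distrib]
    apply Finset.sum_congr rfl
    intro i _
    rw [show p i - 1 = p i - 2 + 1 from by ring, Real.rpow_add_one hx0.ne']
    ring
  have habs : |∑ i, w i * (p i - q) * x ^ (p i - 1)| ≤ S * x ^ (r - 1) := by
    calc |∑ i, w i * (p i - q) * x ^ (p i - 1)|
        ≤ ∑ i, |w i * (p i - q) * x ^ (p i - 1)| := Finset.abs_sum_le_sum_abs _ _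
      _ ≤ ∑ i, w i * (q - p i) * x ^ (r - 1) := by
          apply Finset.sum_le_sum
          intro i _
          have hwi := hw i
          have hxp : (0:ℝ) < x ^ (p i - 1) := Real.rpow_pos_of_pos hx0 _
          have habsi : |w i * (p i - q) * x ^ (p i - 1)| =
              w i * (q - p i) * x ^ (p i - 1) := by
            rw [abs_mul, abs_mul, abs_of_pos hwi, abs_of_pos hxp,
              abs_of_nonpos (by have := hqp i; linarith)]
            ring
          rw [habsi]
          by_cases hi : i = a
          · subst hi; rw [← hqdef]; simp
          · have hle : x ^ (p i - 1) ≤ x ^ (r - 1) :=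
              Real.rpow_le_rpow_of_exponent_le hx (by have := hple i hi; linarith)
            have : 0 ≤ w i * (q - p i) := by have := hqp i; nlinarith
            nlinarith
      _ = S * x ^ (r - 1) := by rw [hSdef, Finset.sum_mul]
  have heq : (∑ i, w i * x ^ (p i - 1)) / D - x / (1 - q) =
      ((∑ i, w i * x ^ (p i - 1)) * (1 - q) - D * x) / (D * (1 - q)) :=
    div_sub_div _ _ hD0.ne' hq1.ne'
  rw [heq, key, abs_div, abs_of_pos (mul_pos hD0 hq1)]
  have hden : w a * (1 - q) ^ 2 * x ^ (q - 2) ≤ D * (1 - q) := by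
    calc w a * (1 - q) ^ 2 * x ^ (q - 2) = (w a * (1 - q) * x ^ (q - 2)) * (1 - q) := by ring
      _ ≤ D * (1 - q) := by exact mul_le_mul_of_nonneg_right hDlow hq1.le
  have hden0 : 0 < w a * (1 - q) ^ 2 * x ^ (q - 2) :=
    mul_pos (mul_pos hwa (pow_pos hq1 2)) (Real.rpow_pos_of_pos hx0 _)
  calc |∑ i, w i * (p i - q) * x ^ (p i - 1)| / (D * (1 - q))
      ≤ (S * x ^ (r - 1)) / (w a * (1 - q) ^ 2 * x ^ (q - 2)) := by
        exact div_le_div₀ (mul_nonneg hS0.le (Real.rpow_pos_of_pos hx0 _).le) habs hden0 hden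
    _ = S * x ^ (r - q + 1) * x ^ (q - 2) / (w a * (1 - q) ^ 2 * x ^ (q - 2)) := by
        rw [show r - 1 = (r - q + 1) + (q - 2) from by ring, Real.rpow_add hx0]
        ring
    _ = S / (w a * (1 - q) ^ 2) * x ^ (r - q + 1) := by
        rw [mul_div_mul_right _ _ (Real.rpow_pos_of_pos hx0 (q - 2)).ne']
        ring
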